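/- arXiv:2404.19290 — 3 statements merged into one kernel-verified Lean document; each statement's English description precedes it below -/
import Mathlib

section
/- Let ρ > 1 and let h be a complex-valued function analytic on an open set containing the closed annulus {z ∈ ℂ : 1/ρ ≤ |z| ≤ ρ}. Define I(h) = (1/2π)∫₀^{2π} h(e^{iθ}) dθ, and for an integer N > 1 define T_N(h) = (1/N)∑_{k=0}^{N−1} h(e^{2πik/N}) and ‖h‖ = (1/2π)∫₀^{2π} |h(ρ^{−1}e^{iθ})| dθ + (1/2π)∫₀^{2π} |h(ρe^{iθ})| dθ. Then |T_N(h) − I(h)| ≤ (ρ^{−N}/(1 − ρ^{−N})) · ‖h‖. -/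
open MeasureTheory intervalIntegral Real Complex

noncomputable section

/-- Circle integral of `z^(-(m+1)) * h z` unfolded. -/
lemma aux_circ (m : ℤ) (r : ℝ) (hr : 0 < r) (h : ℂ → ℂ) :
    (∮ z in C(0, r), z ^ (-(m+1)) * h z)
      = (Complex.I * ((r:ℂ) ^ (-m))) * ∫ θ in (0:ℝ)..2*Real.pi,
          Complex.exp (-(m:ℂ) * (θ:ℂ) * Complex.I) * h ((r:ℂ) * Complex.exp ((θ:ℂ) * Complex.I)) := by
  rw [circleIntegral, ← intervalIntegral.integral_const_mul]
  refine intervalIntegral.integral_congr fun θ _ => ?_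
  have hrne : (r:ℂ) ≠ 0 := Complex.ofReal_ne_zero.mpr hr.ne'
  have he : Complex.exp ((θ:ℂ) * Complex.I) ≠ 0 := Complex.exp_ne_zero _
  simp only [deriv_circleMap, circleMap_zero, smul_eq_mul]
  rw [mul_zpow]
  rw [show (Complex.exp ((θ:ℂ) * Complex.I)) ^ (-(m+1)) =
      Complex.exp ((-(m+1) : ℤ) * ((θ:ℂ) * Complex.I)) by rw [Complex.exp_int_mul]]
  have h1 : (r:ℂ) * (r:ℂ) ^ (-(m+1)) = (r:ℂ) ^ (-m) := by
    rw [← zpow_one_add₀ hrne]; ring_nf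
  have : Complex.exp ((θ:ℂ) * Complex.I) * Complex.exp ((-(m+1) : ℤ) * ((θ:ℂ) * Complex.I))
      = Complex.exp (-(m:ℂ) * (θ:ℂ) * Complex.I) := by
    rw [← Complex.exp_add]; congr 1; push_cast; ring
  linear_combination (Complex.I * h ((r:ℂ) * Complex.exp ((θ:ℂ) * Complex.I)) *
      Complex.exp ((θ:ℂ) * Complex.I) * Complex.exp ((-(m+1) : ℤ) * ((θ:ℂ) * Complex.I))) * h1
    + (Complex.I * h ((r:ℂ) * Complex.exp ((θ:ℂ) * Complex.I)) * (r:ℂ) ^ (-m)) * this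

lemma aux_annulus (ρ : ℝ) (hρ : 1 < ρ) (h : ℂ → ℂ) (U : Set ℂ) (hU : IsOpen U)
    (hUsub : {z : ℂ | ρ⁻¹ ≤ ‖z‖ ∧ ‖z‖ ≤ ρ} ⊆ U)
    (hh : DifferentiableOn ℂ h U) (m : ℤ) (r : ℝ) (hr : r ∈ Set.Icc ρ⁻¹ ρ) :
    (∮ z in C(0, r), z ^ (-(m+1)) * h z) = (∮ z in C(0, ρ), z ^ (-(m+1)) * h z) := by
  have hρ0 : (0:ℝ) < ρ⁻¹ := inv_pos.mpr (by linarith)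
  have hr0 : 0 < r := lt_of_lt_of_le hρ0 hr.1
  have hsub : Metric.closedBall (0:ℂ) ρ \ Metric.ball 0 r ⊆ U := by
    rintro z ⟨hz1, hz2⟩
    refine hUsub ⟨?_, ?_⟩
    · simp only [Metric.mem_ball, Complex.dist_eq, sub_zero, not_lt] at hz2
      exact le_trans hr.1 hz2
    · simpa [Complex.dist_eq] using hz1
  have hne : ∀ z ∈ Metric.closedBall (0:ℂ) ρ \ Metric.ball 0 r, z ≠ 0 := by
    rintro z ⟨-, hz2⟩ rfl
    simp only [Metric.mem_ball, dist_self, not_lt] at hz2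
    linarith
  refine (circleIntegral_eq_of_differentiable_on_annulus_off_countable hr0 hr.2
    (Set.countable_empty) ?_ ?_).symm
  · exact ((continuousOn_id.zpow₀ _ (fun z hz => Or.inl (hne z hz))).mul
      (hh.continuousOn.mono hsub))
  · rintro z ⟨⟨hz1, hz2⟩, -⟩
    simp only [Metric.mem_ball, Metric.mem_closedBall, Complex.dist_eq, sub_zero, not_le] at hz1 hz2
    have hzU : z ∈ U := hUsub ⟨le_trans hr.1 hz2.le, hz1.le⟩
    have hz0 : z ≠ 0 := by
      intro h0; rw [h0] at hz2; simp at hz2; linarith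
    exact ((differentiableAt_zpow.mpr (Or.inl hz0)).mul
      (hh.differentiableAt (hU.mem_nhds hzU)))

lemma aux_K (ρ : ℝ) (hρ : 1 < ρ) (h : ℂ → ℂ) (U : Set ℂ) (hU : IsOpen U)
    (hUsub : {z : ℂ | ρ⁻¹ ≤ ‖z‖ ∧ ‖z‖ ≤ ρ} ⊆ U)
    (hh : DifferentiableOn ℂ h U) (m : ℤ) (r : ℝ) (hr : r ∈ Set.Icc ρ⁻¹ ρ) :
    ‖∫ θ in (0:ℝ)..2*Real.pi,
        Complex.exp (-(m:ℂ) * (θ:ℂ) * Complex.I) * h ((1:ℂ) * Complex.exp ((θ:ℂ) * Complex.I))‖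
      ≤ (r ^ (-m) : ℝ) * ∫ θ in (0:ℝ)..2*Real.pi,
          ‖(h ((r:ℝ) * Complex.exp ((θ:ℂ) * Complex.I)))‖ := by
  have hρ0 : (0:ℝ) < ρ⁻¹ := inv_pos.mpr (by linarith)
  have hr0 : 0 < r := lt_of_lt_of_le hρ0 hr.1
  have h1 : (1:ℝ) ∈ Set.Icc ρ⁻¹ ρ := ⟨inv_le_one_of_one_le₀ hρ.le, hρ.le⟩
  have e1 := (aux_circ m 1 one_pos h).symm.trans
    ((aux_annulus ρ hρ h U hU hUsub hh m 1 h1).trans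
      (aux_annulus ρ hρ h U hU hUsub hh m r hr).symm |>.trans (aux_circ m r hr0 h))
  -- e1 : I * 1^(-m) * K1 = I * r^(-m) * Kr
  have hK : (∫ θ in (0:ℝ)..2*Real.pi,
        Complex.exp (-(m:ℂ) * (θ:ℂ) * Complex.I) * h ((1:ℂ) * Complex.exp ((θ:ℂ) * Complex.I)))
      = ((r:ℂ) ^ (-m)) * ∫ θ in (0:ℝ)..2*Real.pi,
        Complex.exp (-(m:ℂ) * (θ:ℂ) * Complex.I) * h ((r:ℝ) * Complex.exp ((θ:ℂ) * Complex.I)) := by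
    have hI : (Complex.I : ℂ) ≠ 0 := Complex.I_ne_zero
    simp only [Complex.ofReal_one, one_zpow, mul_one] at e1
    field_simp at e1 ⊢
    exact e1
  rw [hK, norm_mul]
  have hnr : ‖(r:ℂ) ^ (-m)‖ = r ^ (-m) := by
    rw [norm_zpow, Complex.norm_real, Real.norm_eq_abs, abs_of_pos hr0]
  rw [hnr]
  have hb : ‖∫ θ in (0:ℝ)..2*Real.pi,
        Complex.exp (-(m:ℂ) * (θ:ℂ) * Complex.I) * h ((r:ℝ) * Complex.exp ((θ:ℂ) * Complex.I))‖
      ≤ ∫ θ in (0:ℝ)..2*Real.pi,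
        ‖Complex.exp (-(m:ℂ) * (θ:ℂ) * Complex.I) * h ((r:ℝ) * Complex.exp ((θ:ℂ) * Complex.I))‖ :=
    intervalIntegral.norm_integral_le_integral_norm (by positivity)
  have heq : (∫ θ in (0:ℝ)..2*Real.pi,
        ‖Complex.exp (-(m:ℂ) * (θ:ℂ) * Complex.I) * h ((r:ℝ) * Complex.exp ((θ:ℂ) * Complex.I))‖)
      = ∫ θ in (0:ℝ)..2*Real.pi,
        ‖(h ((r:ℝ) * Complex.exp ((θ:ℂ) * Complex.I)))‖ := by
    refine intervalIntegral.integral_congr fun θ _ => ?_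
    rw [norm_mul, Complex.norm_exp]
    simp
  rw [heq] at hb
  have : (0:ℝ) < r ^ (-m) := zpow_pos hr0 _
  exact mul_le_mul_of_nonneg_left hb this.le

lemma aux_filter (N : ℕ) (hN : 1 < N) (m : ℤ) :
    haveI : Fact (0 < 2 * Real.pi) := ⟨Real.two_pi_pos⟩
    ((N:ℂ)⁻¹ * ∑ k ∈ Finset.range N,
        (fourier m (((2*Real.pi*k/N : ℝ) : AddCircle (2*Real.pi)))))
      = if (N:ℤ) ∣ m then 1 else 0 := by
  haveI : Fact (0 < 2 * Real.pi) := ⟨Real.two_pi_pos⟩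
  have hNne : (N:ℂ) ≠ 0 := Nat.cast_ne_zero.mpr (by omega)
  have hπ : (Real.pi:ℂ) ≠ 0 := Complex.ofReal_ne_zero.mpr Real.pi_ne_zero
  set w : ℂ := Complex.exp (2*(Real.pi:ℂ)*Complex.I*m/N) with hw
  have hfk : ∀ k : ℕ, (fourier m (((2*Real.pi*k/N : ℝ) : AddCircle (2*Real.pi))) : ℂ) = w ^ k := by
    intro k
    rw [fourier_coe_apply, hw, ← Complex.exp_nat_mul]
    congr 1
    push_cast
    field_simp
  simp only [hfk]
  have hwN : w ^ N = 1 := by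
    rw [hw, ← Complex.exp_nat_mul]
    have : (N:ℂ) * (2*(Real.pi:ℂ)*Complex.I*m/N) = m * (2*(Real.pi:ℂ)*Complex.I) := by
      field_simp
    rw [this, Complex.exp_int_mul_two_pi_mul_I]
  have hw1 : w = 1 ↔ (N:ℤ) ∣ m := by
    rw [hw, Complex.exp_eq_one_iff]
    constructor
    · rintro ⟨n, hn⟩
      refine ⟨n, ?_⟩
      have : (m : ℂ) = n * N := by
        have hI : (Complex.I:ℂ) ≠ 0 := Complex.I_ne_zero
        field_simp at hn
        have h2 : (2:ℂ) * Real.pi * Complex.I * m = 2 * Real.pi * Complex.I * (n * N) := by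
          rw [hn]; ring
        exact mul_left_cancel₀ (by simp [hπ, hI]) h2
      have := this
      rw [mul_comm] at this
      exact_mod_cast this
    · rintro ⟨n, rfl⟩
      exact ⟨n, by push_cast; field_simp⟩
  by_cases hdvd : (N:ℤ) ∣ m
  · rw [if_pos hdvd]
    have : w = 1 := hw1.mpr hdvd
    simp [this, Finset.sum_const, hNne]
  · rw [if_neg hdvd]
    have hwne : w ≠ 1 := fun hc => hdvd (hw1.mp hc)
    rw [geom_sum_eq hwne, hwN]
    simp

/-- error bound for the trapezoid rule approximation of the inverse
`Z`-transform coefficient `I(h)` of a function `h` analytic on an open set containing the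
closed annulus `{z : 1/ρ ≤ |z| ≤ ρ}`. -/
theorem stmt_0 (ρ : ℝ) (hρ : 1 < ρ) (h : ℂ → ℂ) (U : Set ℂ) (hU : IsOpen U)
    (hUsub : {z : ℂ | ρ⁻¹ ≤ ‖z‖ ∧ ‖z‖ ≤ ρ} ⊆ U)
    (hh : DifferentiableOn ℂ h U) (N : ℕ) (hN : 1 < N) :
    ‖((N : ℂ)⁻¹ * (∑ k ∈ Finset.range N,
        h (Complex.exp (2 * (Real.pi : ℂ) * Complex.I * (k : ℂ) / (N : ℂ))))
      - ((1 / (2 * Real.pi) : ℝ) : ℂ) *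
          ∫ θ in (0 : ℝ)..(2 * Real.pi), h (Complex.exp ((θ : ℂ) * Complex.I)))‖
    ≤ (ρ ^ (-(N : ℤ)) / (1 - ρ ^ (-(N : ℤ)))) *
      ((1 / (2 * Real.pi)) * (∫ θ in (0 : ℝ)..(2 * Real.pi),
          ‖(h (((ρ⁻¹ : ℝ) : ℂ) * Complex.exp ((θ : ℂ) * Complex.I)))‖)
       + (1 / (2 * Real.pi)) * (∫ θ in (0 : ℝ)..(2 * Real.pi),
          ‖(h (((ρ : ℝ) : ℂ) * Complex.exp ((θ : ℂ) * Complex.I)))‖)) := by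
  haveI : Fact (0 < 2 * Real.pi) := ⟨Real.two_pi_pos⟩
  have hπ : (0:ℝ) < Real.pi := Real.pi_pos
  have hρ0 : (0:ℝ) < ρ⁻¹ := inv_pos.mpr (by linarith)
  -- the continuous function on the circle
  have hmem : ∀ x : AddCircle (2 * Real.pi), ((AddCircle.toCircle x : ℂ)) ∈ U := by
    intro x
    refine hUsub ⟨?_, ?_⟩ <;> rw [Circle.norm_coe]
    · exact inv_le_one_of_one_le₀ hρ.le
    · exact hρ.le
  set g : C(AddCircle (2 * Real.pi), ℂ) :=
    ⟨fun x => h (AddCircle.toCircle x),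
      hh.continuousOn.comp_continuous
        (continuous_subtype_val.comp AddCircle.continuous_toCircle) hmem⟩ with hg
  have hgcoe : ∀ x : ℝ, g (x : AddCircle (2 * Real.pi)) = h (Complex.exp ((x:ℂ) * Complex.I)) := by
    intro x
    show h _ = _
    congr 1
    rw [← fourier_one, fourier_coe_apply]
    congr 1
    push_cast
    field_simp [Real.pi_ne_zero]
  set a : ℤ → ℂ := fun m => fourierCoeff (⇑g) m with ha
  -- Fourier coefficients as integrals
  have haK : ∀ m : ℤ, a m = ((1/(2*Real.pi) : ℝ) : ℂ) * ∫ θ in (0:ℝ)..2*Real.pi,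
      Complex.exp (-(m:ℂ) * (θ:ℂ) * Complex.I) * h ((1:ℂ) * Complex.exp ((θ:ℂ) * Complex.I)) := by
    intro m
    show fourierCoeff (⇑g) m = _
    rw [fourierCoeff_eq_intervalIntegral _ m 0, zero_add, Complex.real_smul]
    congr 1
    refine intervalIntegral.integral_congr fun θ _ => ?_
    rw [smul_eq_mul, fourier_coe_apply, hgcoe θ, one_mul]
    congr 2
    push_cast
    field_simp [Real.pi_ne_zero]
  -- coefficient bound
  have hbound : ∀ (m : ℤ) (r : ℝ), r ∈ Set.Icc ρ⁻¹ ρ → ‖a m‖ ≤ r ^ (-m) *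
      ((1/(2*Real.pi)) * ∫ θ in (0:ℝ)..2*Real.pi,
        ‖(h ((r:ℝ) * Complex.exp ((θ:ℂ) * Complex.I)))‖) := by
    intro m r hr
    have hr0 : 0 < r := lt_of_lt_of_le hρ0 hr.1
    rw [haK m, norm_mul]
    have h2 : ‖((1/(2*Real.pi) : ℝ) : ℂ)‖ = 1/(2*Real.pi) := by
      rw [Complex.norm_real, Real.norm_eq_abs, abs_of_pos (by positivity)]
    rw [h2]
    calc (1/(2*Real.pi)) * ‖∫ θ in (0:ℝ)..2*Real.pi,
          Complex.exp (-(m:ℂ) * (θ:ℂ) * Complex.I) * h ((1:ℂ) * Complex.exp ((θ:ℂ) * Complex.I))‖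
        ≤ (1/(2*Real.pi)) * ((r ^ (-m) : ℝ) * ∫ θ in (0:ℝ)..2*Real.pi,
            ‖(h ((r:ℝ) * Complex.exp ((θ:ℂ) * Complex.I)))‖) := by
          have := aux_K ρ hρ h U hU hUsub hh m r hr
          exact mul_le_mul_of_nonneg_left this (by positivity)
      _ = _ := by ring
  have hq0 : (0:ℝ) < ρ ^ (-(N:ℤ)) := zpow_pos (by linarith) _
  have hq1 : ρ ^ (-(N:ℤ)) < 1 := by
    rw [zpow_neg, inv_lt_one_iff₀]
    right
    rw [zpow_natCast]
    exact one_lt_pow₀ hρ (by omega)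
  set q : ℝ := ρ ^ (-(N:ℤ)) with hqdef
  have hinv1 : ρ⁻¹ < 1 := inv_lt_one_of_one_lt₀ hρ
  have hmemρ : ρ ∈ Set.Icc ρ⁻¹ ρ := ⟨le_trans hinv1.le hρ.le, le_refl _⟩
  have hmeminv : ρ⁻¹ ∈ Set.Icc ρ⁻¹ ρ := ⟨le_refl _, le_trans hinv1.le hρ.le⟩
  -- summability of the coefficients
  have hsum : Summable a := by
    apply Summable.of_nat_of_neg
    · apply Summable.of_norm_bounded ((summable_geometric_of_lt_one hρ0.le hinv1).mul_left
        ((1/(2*Real.pi)) * ∫ θ in (0:ℝ)..2*Real.pi,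
          ‖(h ((ρ:ℝ) * Complex.exp ((θ:ℂ) * Complex.I)))‖))
      intro n
      have := hbound n ρ hmemρ
      calc ‖a n‖ ≤ ρ ^ (-(n:ℤ)) * _ := this
        _ = _ * ρ⁻¹ ^ n := by rw [zpow_neg, zpow_natCast, ← inv_pow]; ring
    · apply Summable.of_norm_bounded ((summable_geometric_of_lt_one hρ0.le hinv1).mul_left
        ((1/(2*Real.pi)) * ∫ θ in (0:ℝ)..2*Real.pi,
          ‖(h (((ρ⁻¹:ℝ):ℂ) * Complex.exp ((θ:ℂ) * Complex.I)))‖))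
      intro n
      have := hbound (-(n:ℤ)) ρ⁻¹ hmeminv
      calc ‖a (-(n:ℤ))‖ ≤ ρ⁻¹ ^ (-(-(n:ℤ))) * _ := this
        _ = _ * ρ⁻¹ ^ n := by rw [neg_neg, zpow_natCast]; ring
  have hpt : ∀ x : AddCircle (2*Real.pi), HasSum (fun m => a m * fourier m x) (g x) := by
    intro x
    simpa [smul_eq_mul] using has_pointwise_sum_fourier_series_of_summable (f := g) hsum x
  -- abbreviations for the two boundary norms
  set Bρ : ℝ := (1/(2*Real.pi)) * ∫ θ in (0:ℝ)..2*Real.pi,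
      ‖(h ((ρ:ℝ) * Complex.exp ((θ:ℂ) * Complex.I)))‖ with hBρ
  set Bi : ℝ := (1/(2*Real.pi)) * ∫ θ in (0:ℝ)..2*Real.pi,
      ‖(h (((ρ⁻¹:ℝ):ℂ) * Complex.exp ((θ:ℂ) * Complex.I)))‖ with hBi
  -- the trapezoid sum
  set T : ℂ := (N : ℂ)⁻¹ * (∑ k ∈ Finset.range N,
      h (Complex.exp (2 * (Real.pi : ℂ) * Complex.I * (k : ℂ) / (N : ℂ)))) with hT
  have hTk : ∀ k : ℕ, h (Complex.exp (2 * (Real.pi : ℂ) * Complex.I * (k : ℂ) / (N : ℂ)))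
      = g (((2*Real.pi*k/N : ℝ) : AddCircle (2*Real.pi))) := by
    intro k
    rw [hgcoe]
    congr 1
    push_cast
    ring
  have hhs1 : HasSum (fun m : ℤ => (N:ℂ)⁻¹ * ∑ k ∈ Finset.range N,
      (a m * fourier m (((2*Real.pi*k/N : ℝ) : AddCircle (2*Real.pi))))) T := by
    have hsk := hasSum_sum (s := Finset.range N)
      (f := fun (k : ℕ) (m : ℤ) => a m * fourier m (((2*Real.pi*k/N : ℝ) : AddCircle (2*Real.pi))))
      (a := fun k => g (((2*Real.pi*k/N : ℝ) : AddCircle (2*Real.pi))))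
      (fun k _ => hpt _)
    have := hsk.mul_left ((N:ℂ)⁻¹)
    rw [hT]
    rw [Finset.sum_congr rfl fun k _ => hTk k]
    exact this
  have hhs2 : HasSum (fun m : ℤ => if (N:ℤ) ∣ m then a m else 0) T := by
    have hfun : (fun m : ℤ => (N:ℂ)⁻¹ * ∑ k ∈ Finset.range N,
        (a m * fourier m (((2*Real.pi*k/N : ℝ) : AddCircle (2*Real.pi)))))
        = fun m : ℤ => if (N:ℤ) ∣ m then a m else 0 := by
      funext m
      have hf := aux_filter N hN m
      calc (N:ℂ)⁻¹ * ∑ k ∈ Finset.range N,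
            (a m * fourier m (((2*Real.pi*k/N : ℝ) : AddCircle (2*Real.pi))))
          = a m * ((N:ℂ)⁻¹ * ∑ k ∈ Finset.range N,
            (fourier m (((2*Real.pi*k/N : ℝ) : AddCircle (2*Real.pi))) : ℂ)) := by
            rw [← Finset.mul_sum]; ring
        _ = a m * (if (N:ℤ) ∣ m then 1 else 0) := by rw [hf]
        _ = if (N:ℤ) ∣ m then a m else 0 := by rw [mul_ite, mul_one, mul_zero]
    rw [← hfun]
    exact hhs1
  -- restrict the sum to multiples of N
  have hN0 : (N:ℤ) ≠ 0 := by exact_mod_cast (by omega : N ≠ 0)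
  have hinj : Function.Injective (fun j : ℤ => j * (N:ℤ)) := fun x y hxy =>
    mul_right_cancel₀ hN0 hxy
  have hvan : ∀ m ∉ Set.range (fun j : ℤ => j * (N:ℤ)),
      (if (N:ℤ) ∣ m then a m else 0) = 0 := by
    intro m hm
    rw [if_neg]
    rintro ⟨c, rfl⟩
    exact hm ⟨c, by ring⟩
  have hhs3 : HasSum (fun j : ℤ => a (j * N)) T := by
    have h3 := (hinj.hasSum_iff hvan).mpr hhs2
    have heq : ((fun m : ℤ => if (N:ℤ) ∣ m then a m else 0) ∘ (fun j : ℤ => j * (N:ℤ)))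
        = fun j : ℤ => a (j * N) := by
      funext j
      simp only [Function.comp_apply]
      rw [if_pos (Dvd.intro_left _ rfl)]
    rwa [heq] at h3
  -- geometric bounds for the tails
  have hzq : ∀ n : ℕ, ρ ^ (-(((n:ℤ)+1) * N)) = q ^ (n+1) := by
    intro n
    rw [hqdef, ← zpow_natCast (ρ ^ (-(N:ℤ))), ← zpow_mul]
    congr 1
    push_cast
    ring
  have bp : ∀ n : ℕ, ‖a (((n:ℤ)+1) * N)‖ ≤ Bρ * q ^ (n+1) := by
    intro n
    have := hbound (((n:ℤ)+1) * N) ρ hmemρ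
    rw [hzq n] at this
    calc ‖a (((n:ℤ)+1) * N)‖ ≤ q ^ (n+1) * Bρ := this
      _ = Bρ * q ^ (n+1) := by ring
  have bn : ∀ n : ℕ, ‖a ((-((n:ℤ)+1)) * N)‖ ≤ Bi * q ^ (n+1) := by
    intro n
    have := hbound ((-((n:ℤ)+1)) * N) ρ⁻¹ hmeminv
    have harg : (ρ⁻¹) ^ (-((-((n:ℤ)+1)) * N)) = q ^ (n+1) := by
      rw [← hzq n, inv_zpow, ← zpow_neg]
      congr 1
      ring
    rw [harg] at this
    calc ‖a ((-((n:ℤ)+1)) * N)‖ ≤ q ^ (n+1) * Bi := this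
      _ = Bi * q ^ (n+1) := by ring
  have hgeom : Summable (fun n : ℕ => q ^ (n+1)) := by
    have := (summable_geometric_of_lt_one hq0.le hq1).mul_right q
    refine this.congr fun n => ?_
    rw [pow_succ]
  have sp : Summable (fun n : ℕ => a (((n:ℤ)+1) * N)) :=
    Summable.of_norm_bounded (hgeom.mul_left Bρ) bp
  have sn : Summable (fun n : ℕ => a ((-((n:ℤ)+1)) * N)) :=
    Summable.of_norm_bounded (hgeom.mul_left Bi) bn
  have hdecomp := tsum_of_add_one_of_neg_add_one (f := fun j : ℤ => a (j * N)) sp sn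
  -- identify I(h) with a 0
  have ha0 : ((1 / (2 * Real.pi) : ℝ) : ℂ) *
      (∫ θ in (0 : ℝ)..(2 * Real.pi), h (Complex.exp ((θ : ℂ) * Complex.I))) = a 0 := by
    rw [haK 0]
    congr 1
    refine intervalIntegral.integral_congr fun θ _ => ?_
    simp
  have hTdiff : T - ((1 / (2 * Real.pi) : ℝ) : ℂ) *
      (∫ θ in (0 : ℝ)..(2 * Real.pi), h (Complex.exp ((θ : ℂ) * Complex.I)))
      = (∑' n : ℕ, a (((n:ℤ)+1) * N)) + ∑' n : ℕ, a ((-((n:ℤ)+1)) * N) := by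
    rw [ha0, ← hhs3.tsum_eq, hdecomp]
    simp only [zero_mul]
    ring
  rw [hTdiff]
  -- norm bounds on the two tails
  have hBρ0 : 0 ≤ Bρ := by
    rw [hBρ]
    have : 0 ≤ ∫ θ in (0:ℝ)..2*Real.pi,
        ‖(h ((ρ:ℝ) * Complex.exp ((θ:ℂ) * Complex.I)))‖ :=
      intervalIntegral.integral_nonneg (by positivity) (fun θ _ => norm_nonneg _)
    positivity
  have hBi0 : 0 ≤ Bi := by
    rw [hBi]
    have : 0 ≤ ∫ θ in (0:ℝ)..2*Real.pi,
        ‖(h (((ρ⁻¹:ℝ):ℂ) * Complex.exp ((θ:ℂ) * Complex.I)))‖ :=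
      intervalIntegral.integral_nonneg (by positivity) (fun θ _ => norm_nonneg _)
    positivity
  have hgsum : ∑' n : ℕ, q ^ (n+1) = q / (1 - q) := by
    have h1 : ∑' n : ℕ, q ^ (n+1) = (∑' n : ℕ, q ^ n) * q := by
      rw [← tsum_mul_right]
      exact tsum_congr fun n => by rw [pow_succ]
    rw [h1, tsum_geometric_of_lt_one hq0.le hq1, div_eq_mul_inv, mul_comm]
  have spn : Summable (fun n : ℕ => ‖a (((n:ℤ)+1) * N)‖) :=
    Summable.of_nonneg_of_le (fun n => norm_nonneg _) bp (hgeom.mul_left Bρ)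
  have snn : Summable (fun n : ℕ => ‖a ((-((n:ℤ)+1)) * N)‖) :=
    Summable.of_nonneg_of_le (fun n => norm_nonneg _) bn (hgeom.mul_left Bi)
  have tailp : ‖∑' n : ℕ, a (((n:ℤ)+1) * N)‖ ≤ Bρ * (q / (1 - q)) := by
    calc ‖∑' n : ℕ, a (((n:ℤ)+1) * N)‖ ≤ ∑' n : ℕ, ‖a (((n:ℤ)+1) * N)‖ :=
        norm_tsum_le_tsum_norm spn
      _ ≤ ∑' n : ℕ, Bρ * q ^ (n+1) := Summable.tsum_le_tsum bp spn (hgeom.mul_left Bρ)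
      _ = Bρ * (q / (1 - q)) := by rw [tsum_mul_left, hgsum]
  have tailn : ‖∑' n : ℕ, a ((-((n:ℤ)+1)) * N)‖ ≤ Bi * (q / (1 - q)) := by
    calc ‖∑' n : ℕ, a ((-((n:ℤ)+1)) * N)‖ ≤ ∑' n : ℕ, ‖a ((-((n:ℤ)+1)) * N)‖ :=
        norm_tsum_le_tsum_norm snn
      _ ≤ ∑' n : ℕ, Bi * q ^ (n+1) := Summable.tsum_le_tsum bn snn (hgeom.mul_left Bi)
      _ = Bi * (q / (1 - q)) := by rw [tsum_mul_left, hgsum]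
  calc ‖(∑' n : ℕ, a (((n:ℤ)+1) * N)) + ∑' n : ℕ, a ((-((n:ℤ)+1)) * N)‖
      ≤ ‖∑' n : ℕ, a (((n:ℤ)+1) * N)‖ + ‖∑' n : ℕ, a ((-((n:ℤ)+1)) * N)‖ := norm_add_le _ _
    _ ≤ Bρ * (q / (1 - q)) + Bi * (q / (1 - q)) := add_le_add tailp tailn
    _ = q / (1 - q) * (Bi + Bρ) := by ring
end
end

section
/- Let σ > 0, b > 0, and ω ∈ (−π/2, π/2) satisfy b > σ·sin ω and σ − b·sin ω ≥ 0. Then inf_{y∈ℝ} |σ + i·b·sinh(iω + y)| = σ − b·sin ω, and the infimum is attained at y = 0; that is, the distance from the curve L_{σ,b,ω} = {σ + i·b·sinh(iω + y) : y ∈ ℝ} to the origin equals σ − b·sin ω. -/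
/-- The sinh-map `χ_{σ,b,ω}(y) = σ + i·b·sinh(iω + y)`. -/
noncomputable def chi (σ b ω : ℝ) (y : ℂ) : ℂ :=
  (σ : ℂ) + Complex.I * (b : ℂ) * Complex.sinh (Complex.I * (ω : ℂ) + y)

lemma chi_eq (σ b ω y : ℝ) :
    chi σ b ω (y : ℂ) = ((σ - b * Real.sin ω * Real.cosh y : ℝ) : ℂ)
      + ((b * Real.cos ω * Real.sinh y : ℝ) : ℂ) * Complex.I := by
  rw [chi, Complex.sinh_add, mul_comm Complex.I (ω : ℂ), Complex.sinh_mul_I,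
    Complex.cosh_mul_I]
  push_cast
  rw [← Complex.ofReal_sin, ← Complex.ofReal_cos, ← Complex.ofReal_sinh, ← Complex.ofReal_cosh]
  ring_nf
  rw [Complex.I_sq]
  ring

lemma chi_abs_sq (σ b ω y : ℝ) :
    (‖chi σ b ω (y : ℂ)‖)^2 =
      (σ - b * Real.sin ω * Real.cosh y)^2 + (b * Real.cos ω * Real.sinh y)^2 := by
  rw [chi_eq, ← Complex.normSq_eq_norm_sq, Complex.normSq_apply]
  simp [Complex.sin_ofReal_re, Complex.cos_ofReal_re, Complex.sinh_ofReal_re]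
  ring

/-- if `b > σ sin ω` and `σ − b sin ω ≥ 0`, the distance from the sinh-deformed
curve `L_{σ,b,ω}` to the origin equals `σ − b sin ω`, attained at `y = 0`. -/
theorem stmt_5 (σ b ω : ℝ) (hσ : 0 < σ) (hb : 0 < b)
    (hω : ω ∈ Set.Ioo (-(Real.pi / 2)) (Real.pi / 2))
    (h1 : σ * Real.sin ω < b) (h2 : 0 ≤ σ - b * Real.sin ω) :
    (⨅ y : ℝ, ‖chi σ b ω (y : ℂ)‖) = σ - b * Real.sin ω ∧
    ‖chi σ b ω 0‖ = σ - b * Real.sin ω ∧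
    ∀ y : ℝ, σ - b * Real.sin ω ≤ ‖chi σ b ω (y : ℂ)‖ := by
  have hlow : ∀ y : ℝ, σ - b * Real.sin ω ≤ ‖chi σ b ω (y : ℂ)‖ := by
    intro y
    have hsq := chi_abs_sq σ b ω y
    have hcosh := Real.one_le_cosh y
    have hcsq : Real.cosh y ^ 2 = Real.sinh y ^ 2 + 1 := Real.cosh_sq y
    have habs : (0:ℝ) ≤ ‖chi σ b ω (y : ℂ)‖ := norm_nonneg _
    have hcos : Real.sin ω ^ 2 + Real.cos ω ^ 2 = 1 := Real.sin_sq_add_cos_sq ω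
    have hfac : 0 ≤ b^2 * Real.cosh y + b^2 - 2*σ*b*Real.sin ω := by nlinarith
    have hid : (σ - b * Real.sin ω * Real.cosh y)^2 + (b * Real.cos ω * Real.sinh y)^2
        - (σ - b * Real.sin ω)^2
        = (Real.cosh y - 1) * (b^2 * Real.cosh y + b^2 - 2*σ*b*Real.sin ω) := by
      linear_combination (b^2 * Real.sinh y ^ 2) * hcos
        - (b^2 - b^2 * Real.sin ω ^ 2) * hcsq
    have hkey : (σ - b * Real.sin ω)^2 ≤ (‖chi σ b ω (y : ℂ)‖)^2 := by
      rw [hsq]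
      nlinarith [mul_nonneg (sub_nonneg.2 hcosh) hfac, hid]
    nlinarith
  have hzero : ‖chi σ b ω 0‖ = σ - b * Real.sin ω := by
    have h0 : ((0:ℝ):ℂ) = (0:ℂ) := by norm_num
    have hsq := chi_abs_sq σ b ω 0
    rw [h0] at hsq
    simp only [Real.cosh_zero, Real.sinh_zero, mul_one, mul_zero] at hsq
    have habs : (0:ℝ) ≤ ‖chi σ b ω 0‖ := norm_nonneg _
    calc ‖chi σ b ω 0‖ = Real.sqrt ((‖chi σ b ω 0‖)^2) :=
            (Real.sqrt_sq habs).symm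
      _ = Real.sqrt ((σ - b * Real.sin ω)^2) := by rw [hsq]; ring_nf
      _ = σ - b * Real.sin ω := Real.sqrt_sq h2
  refine ⟨le_antisymm ?_ (le_ciInf hlow), hzero, hlow⟩
  have hb' : BddBelow (Set.range fun y : ℝ => ‖chi σ b ω (y : ℂ)‖) :=
    ⟨σ - b * Real.sin ω, by rintro x ⟨y, rfl⟩; exact hlow y⟩
  have := ciInf_le hb' (0 : ℝ)
  simpa [hzero] using this
end

section
/- Let σ ∈ ℝ, b > 0, and ω ∈ (−π/2, π/2) satisfy b > σ·sin ω and σ − b·sin ω > 0, and write χ(y) = σ + i·b·sinh(iω + y). Let m ∈ ℝ, C₀ > 0, and let n be an integer with n > m. Suppose ũ is a function defined on the curve L_{σ,b,ω} = χ(ℝ) with |ũ(z)| ≤ C₀·(1 + |z|)^m for all z ∈ L_{σ,b,ω}. Then there exists a constant C > 0 such that for all y ∈ ℝ, |b·cosh(iω + y)·ũ(χ(y))·χ(y)^{−n−1}| ≤ C·e^{(m−n)|y|}. -/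
lemma abs_chi (σ b ω y : ℝ) :
    ‖chi σ b ω (y : ℂ)‖
      = Real.sqrt ((σ - b * Real.sin ω * Real.cosh y) ^ 2
          + (b * Real.cos ω * Real.sinh y) ^ 2) := by
  rw [chi_eq, Complex.norm_add_mul_I]

lemma cosh_arg_eq (ω y : ℝ) :
    Complex.cosh (Complex.I * (ω : ℂ) + (y : ℂ))
      = ((Real.cos ω * Real.cosh y : ℝ) : ℂ)
        + ((Real.sin ω * Real.sinh y : ℝ) : ℂ) * Complex.I := by
  rw [show Complex.I * (ω : ℂ) + (y : ℂ) = (ω : ℂ) * Complex.I + (y : ℂ) from by ring,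
    Complex.cosh_add, Complex.sinh_mul_I, Complex.cosh_mul_I,
    ← Complex.ofReal_sinh, ← Complex.ofReal_cosh, ← Complex.ofReal_sin, ← Complex.ofReal_cos]
  push_cast
  ring

lemma abs_cosh_le (ω y : ℝ) :
    ‖Complex.cosh (Complex.I * (ω : ℂ) + (y : ℂ))‖ ≤ Real.cosh y := by
  rw [cosh_arg_eq, Complex.norm_add_mul_I]
  have h1 : (Real.cos ω * Real.cosh y) ^ 2 + (Real.sin ω * Real.sinh y) ^ 2
      ≤ Real.cosh y ^ 2 := by
    nlinarith [Real.sin_sq_add_cos_sq ω, Real.cosh_sq y, sq_nonneg (Real.sin ω)]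
  calc Real.sqrt ((Real.cos ω * Real.cosh y) ^ 2 + (Real.sin ω * Real.sinh y) ^ 2)
      ≤ Real.sqrt (Real.cosh y ^ 2) := Real.sqrt_le_sqrt h1
    _ = Real.cosh y := by rw [Real.sqrt_sq (Real.cosh_pos y).le]

lemma cosh_le_exp_abs (y : ℝ) : Real.cosh y ≤ Real.exp |y| := by
  rw [← Real.cosh_abs, Real.cosh_eq]
  have h1 : Real.exp (-|y|) ≤ Real.exp |y| :=
    Real.exp_le_exp.mpr (by simp [neg_le, neg_abs_le, abs_nonneg])
  linarith

lemma exp_abs_le_two_cosh (y : ℝ) : Real.exp |y| ≤ 2 * Real.cosh y := by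
  rw [← Real.cosh_abs, Real.cosh_eq]
  have := (Real.exp_pos (-|y|)).le
  linarith

lemma abs_sinh_le_cosh (y : ℝ) : |Real.sinh y| ≤ Real.cosh y := by
  rw [abs_le]
  constructor
  · nlinarith [Real.exp_pos y, Real.sinh_add_cosh y]
  · nlinarith [Real.exp_pos (-y), Real.cosh_sub_sinh y]

/-- Upper bound on `|χ(y)|`. -/
lemma chi_upper (σ b ω : ℝ) (hb : 0 < b) (y : ℝ) :
    ‖chi σ b ω (y : ℂ)‖ ≤ (|σ| + 2 * b) * Real.exp |y| := by
  have hcosh := Real.one_le_cosh y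
  have hsinh := abs_sinh_le_cosh y
  have hcos : |Real.cos ω| ≤ 1 := Real.abs_cos_le_one ω
  have hsin : |Real.sin ω| ≤ 1 := Real.abs_sin_le_one ω
  have htri : ‖chi σ b ω (y : ℂ)‖
      ≤ |σ - b * Real.sin ω * Real.cosh y| + |b * Real.cos ω * Real.sinh y| := by
    rw [chi_eq]
    have := Complex.norm_le_abs_re_add_abs_im
      (((σ - b * Real.sin ω * Real.cosh y : ℝ) : ℂ)
        + ((b * Real.cos ω * Real.sinh y : ℝ) : ℂ) * Complex.I)
    simpa only [Complex.add_re, Complex.add_im, Complex.ofReal_re, Complex.ofReal_im,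
      Complex.mul_re, Complex.mul_im, Complex.I_re, Complex.I_im, mul_zero, zero_mul, mul_one,
      sub_self, add_zero, zero_add] using this
  have h1 : |σ - b * Real.sin ω * Real.cosh y| ≤ |σ| + b * Real.cosh y := by
    have h2 : |σ - b * Real.sin ω * Real.cosh y| ≤ |σ| + |b * Real.sin ω * Real.cosh y| :=
      abs_sub _ _
    have h3 : |b * Real.sin ω * Real.cosh y| = b * |Real.sin ω| * Real.cosh y := by
      rw [abs_mul, abs_mul, abs_of_pos hb, abs_of_pos (Real.cosh_pos y)]
    have h4 : |b * Real.sin ω * Real.cosh y| ≤ b * Real.cosh y := by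
      rw [h3]
      calc b * |Real.sin ω| * Real.cosh y ≤ b * 1 * Real.cosh y :=
            mul_le_mul_of_nonneg_right (mul_le_mul_of_nonneg_left hsin hb.le)
              (Real.cosh_pos y).le
        _ = b * Real.cosh y := by ring
    linarith
  have h5 : |b * Real.cos ω * Real.sinh y| ≤ b * Real.cosh y := by
    rw [abs_mul, abs_mul, abs_of_pos hb]
    calc b * |Real.cos ω| * |Real.sinh y| ≤ b * 1 * Real.cosh y := by
          apply mul_le_mul _ hsinh (abs_nonneg _) (by positivity)
          exact mul_le_mul_of_nonneg_left hcos hb.le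
      _ = b * Real.cosh y := by ring
  have h6 : ‖chi σ b ω (y : ℂ)‖ ≤ (|σ| + 2 * b) * Real.cosh y := by
    have : |σ| ≤ |σ| * Real.cosh y := le_mul_of_one_le_right (abs_nonneg σ) hcosh
    nlinarith
  calc ‖chi σ b ω (y : ℂ)‖ ≤ (|σ| + 2 * b) * Real.cosh y := h6
    _ ≤ (|σ| + 2 * b) * Real.exp |y| :=
        mul_le_mul_of_nonneg_left (cosh_le_exp_abs y) (by positivity)

set_option maxHeartbeats 1600000 in
/-- Lower bound on `|χ(y)|`: the curve grows exponentially. -/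
lemma chi_lower (σ b ω : ℝ) (hb : 0 < b)
    (hω : ω ∈ Set.Ioo (-(Real.pi / 2)) (Real.pi / 2))
    (h1 : σ * Real.sin ω < b) (h2 : 0 < σ - b * Real.sin ω) :
    ∃ c : ℝ, 0 < c ∧ ∀ y : ℝ, c * Real.exp |y| ≤ ‖chi σ b ω (y : ℂ)‖ := by
  set s := b * Real.sin ω with hs
  set t := b * Real.cos ω with ht
  have hcos : 0 < Real.cos ω := Real.cos_pos_of_mem_Ioo hω
  have ht0 : 0 < t := mul_pos hb hcos
  have hst : s ^ 2 + t ^ 2 = b ^ 2 := by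
    have := Real.sin_sq_add_cos_sq ω
    rw [hs, ht]; nlinarith
  have hσs : σ * s < b ^ 2 := by
    rw [hs]
    nlinarith
  set R : ℝ := max 1 (2 * (2 * |σ * s| + t ^ 2) / b ^ 2) with hR
  have hR1 : 1 ≤ R := le_max_left _ _
  have hR0 : 0 < R := lt_of_lt_of_le one_pos hR1
  set δ : ℝ := σ - s with hδ
  have hδ0 : 0 < δ := h2
  set ε : ℝ := min (b ^ 2 / 2) (δ ^ 2 / R ^ 2) with hε
  have hε0 : 0 < ε := lt_min (by positivity) (by positivity)
  -- key quadratic estimate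
  have key : ∀ c : ℝ, 1 ≤ c → ε * c ^ 2 ≤ (σ - s * c) ^ 2 + t ^ 2 * (c ^ 2 - 1) := by
    intro c hc
    rcases le_total c R with hcR | hcR
    · have hδle : δ ^ 2 ≤ (σ - s * c) ^ 2 + t ^ 2 * (c ^ 2 - 1) := by
        have hcc : 0 ≤ (c - 1) * (b ^ 2 * (c + 1) - 2 * (σ * s)) := by
          apply mul_nonneg (by linarith)
          nlinarith
        nlinarith
      have hεc : ε * c ^ 2 ≤ δ ^ 2 := by
        have h3 : ε ≤ δ ^ 2 / R ^ 2 := min_le_right _ _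
        have h4 : c ^ 2 ≤ R ^ 2 := by nlinarith
        calc ε * c ^ 2 ≤ (δ ^ 2 / R ^ 2) * R ^ 2 := by
              apply mul_le_mul h3 h4 (by positivity) (by positivity)
          _ = δ ^ 2 := by field_simp
      linarith
    · have hRc : 2 * (2 * |σ * s| + t ^ 2) / b ^ 2 ≤ c :=
        le_trans (le_max_right _ _) hcR
      have hbc : 2 * (2 * |σ * s| + t ^ 2) ≤ b ^ 2 * c := by
        rw [div_le_iff₀ (by positivity : (0:ℝ) < b ^ 2)] at hRc
        linarith
      have habs1 : σ * s ≤ |σ * s| := le_abs_self _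
      have habs2 : -|σ * s| ≤ σ * s := neg_abs_le _
      have h5 : b ^ 2 / 2 * c ^ 2 ≤ (σ - s * c) ^ 2 + t ^ 2 * (c ^ 2 - 1) := by
        nlinarith [sq_nonneg σ, sq_nonneg (σ - s * c), abs_nonneg (σ * s)]
      have h6 : ε ≤ b ^ 2 / 2 := min_le_left _ _
      calc ε * c ^ 2 ≤ b ^ 2 / 2 * c ^ 2 :=
            mul_le_mul_of_nonneg_right h6 (by positivity)
        _ ≤ _ := h5
  refine ⟨Real.sqrt ε / 2, by positivity, fun y => ?_⟩
  have hcosh1 : 1 ≤ Real.cosh y := Real.one_le_cosh y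
  have hkey := key (Real.cosh y) hcosh1
  have habs2 : ‖chi σ b ω (y : ℂ)‖ ^ 2
      = (σ - s * Real.cosh y) ^ 2 + (t * Real.sinh y) ^ 2 := by
    rw [abs_chi, Real.sq_sqrt (by positivity), hs, ht]
  have hsq : (Real.sqrt ε / 2 * Real.exp |y|) ^ 2
      ≤ ‖chi σ b ω (y : ℂ)‖ ^ 2 := by
    rw [habs2]
    have hE2 : Real.exp |y| ^ 2 ≤ 4 * Real.cosh y ^ 2 := by
      nlinarith [exp_abs_le_two_cosh y, Real.exp_pos |y|, Real.cosh_pos y]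
    have h10 : (Real.sqrt ε / 2 * Real.exp |y|) ^ 2 = ε * Real.exp |y| ^ 2 / 4 := by
      rw [mul_pow, div_pow, Real.sq_sqrt hε0.le]
      ring
    have h11 : (t * Real.sinh y) ^ 2 = t ^ 2 * (Real.cosh y ^ 2 - 1) := by
      rw [mul_pow, Real.sinh_sq]
    have h12 : ε * Real.exp |y| ^ 2 ≤ ε * (4 * Real.cosh y ^ 2) :=
      mul_le_mul_of_nonneg_left hE2 hε0.le
    rw [h10, h11]
    nlinarith [hkey, h12]
  have h7 : 0 ≤ Real.sqrt ε / 2 * Real.exp |y| := by positivity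
  have h8 : 0 ≤ ‖chi σ b ω (y : ℂ)‖ := norm_nonneg _
  have h9 := Real.sqrt_le_sqrt hsq
  rwa [Real.sqrt_sq h7, Real.sqrt_sq h8] at h9

/-- rpow sandwich bound. -/
lemma rpow_sandwich (a x E c₁ c₂ : ℝ) (hc₁ : 0 < c₁) (hE : 0 < E)
    (hl : c₁ * E ≤ x) (hu : x ≤ c₂ * E) :
    x ^ a ≤ max (c₁ ^ a) (c₂ ^ a) * E ^ a := by
  have hx0 : 0 < x := lt_of_lt_of_le (by positivity) hl
  have hc₂ : 0 < c₂ := by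
    by_contra h
    push_neg at h
    nlinarith
  rcases le_or_gt 0 a with ha | ha
  · calc x ^ a ≤ (c₂ * E) ^ a := Real.rpow_le_rpow hx0.le hu ha
      _ = c₂ ^ a * E ^ a := Real.mul_rpow hc₂.le hE.le
      _ ≤ max (c₁ ^ a) (c₂ ^ a) * E ^ a := by
          apply mul_le_mul_of_nonneg_right (le_max_right _ _)
          exact Real.rpow_nonneg hE.le a
  · calc x ^ a ≤ (c₁ * E) ^ a := Real.rpow_le_rpow_of_nonpos (by positivity) hl ha.le
      _ = c₁ ^ a * E ^ a := Real.mul_rpow hc₁.le hE.le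
      _ ≤ max (c₁ ^ a) (c₂ ^ a) * E ^ a := by
          apply mul_le_mul_of_nonneg_right (le_max_left _ _)
          exact Real.rpow_nonneg hE.le a

/-- exponential decay of the integrand of the sinh-deformed inverse
`Z`-transform: `|b cosh(iω + y) ũ(χ(y)) χ(y)^{−n−1}| ≤ C e^{(m−n)|y|}`. -/
theorem stmt_19 (σ b ω : ℝ) (hb : 0 < b)
    (hω : ω ∈ Set.Ioo (-(Real.pi / 2)) (Real.pi / 2))
    (h1 : σ * Real.sin ω < b) (h2 : 0 < σ - b * Real.sin ω)
    (m C₀ : ℝ) (hC₀ : 0 < C₀) (n : ℤ) (hn : m < (n : ℝ)) (u : ℂ → ℂ)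
    (hu : ∀ y : ℝ, ‖u (chi σ b ω (y : ℂ))‖
      ≤ C₀ * (1 + ‖chi σ b ω (y : ℂ)‖) ^ m) :
    ∃ C : ℝ, 0 < C ∧ ∀ y : ℝ,
      ‖(b : ℂ) * Complex.cosh (Complex.I * (ω : ℂ) + (y : ℂ)) *
          u (chi σ b ω (y : ℂ)) * (chi σ b ω (y : ℂ)) ^ (-n - 1)‖
        ≤ C * Real.exp ((m - (n : ℝ)) * |y|) := by
  obtain ⟨c₁, hc₁, hlow⟩ := chi_lower σ b ω hb hω h1 h2
  set K : ℝ := |σ| + 2 * b + 1 with hKdef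
  have hK : 0 < K := by positivity
  set M₁ : ℝ := max (c₁ ^ m) (K ^ m) with hM₁
  set M₂ : ℝ := max (c₁ ^ ((-n - 1 : ℤ) : ℝ)) (K ^ ((-n - 1 : ℤ) : ℝ)) with hM₂
  have hM₁0 : 0 < M₁ := lt_max_of_lt_left (Real.rpow_pos_of_pos hc₁ m)
  have hM₂0 : 0 < M₂ := lt_max_of_lt_left (Real.rpow_pos_of_pos hc₁ _)
  refine ⟨b * C₀ * M₁ * M₂, by positivity, fun y => ?_⟩
  set E : ℝ := Real.exp |y| with hEdef
  have hE : 0 < E := Real.exp_pos _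
  have hE1 : 1 ≤ E := Real.one_le_exp (abs_nonneg y)
  set x : ℝ := ‖chi σ b ω (y : ℂ)‖ with hxdef
  have hlx : c₁ * E ≤ x := hlow y
  have hx0 : 0 < x := lt_of_lt_of_le (by positivity) hlx
  have hux : x ≤ K * E := by
    have := chi_upper σ b ω hb y
    have h1E : (|σ| + 2 * b) * E ≤ K * E := by
      apply mul_le_mul_of_nonneg_right _ hE.le
      simp [hKdef]
    exact le_trans this h1E
  have hl1 : c₁ * E ≤ 1 + x := by linarith
  have hu1 : 1 + x ≤ K * E := by
    have := chi_upper σ b ω hb y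
    have : (1 : ℝ) + x ≤ 1 * E + (|σ| + 2 * b) * E := by
      have h1E : (1 : ℝ) ≤ 1 * E := by linarith
      linarith
    calc (1 : ℝ) + x ≤ 1 * E + (|σ| + 2 * b) * E := this
      _ = K * E := by rw [hKdef]; ring
  -- bound on u
  have hrpow1 : (1 + x) ^ m ≤ M₁ * E ^ m := rpow_sandwich m (1 + x) E c₁ K hc₁ hE hl1 hu1
  have hubd : ‖u (chi σ b ω (y : ℂ))‖ ≤ C₀ * (M₁ * E ^ m) :=
    le_trans (hu y) (mul_le_mul_of_nonneg_left hrpow1 hC₀.le)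
  -- bound on the power of chi
  have hzpow : x ^ (-n - 1 : ℤ) = x ^ ((-n - 1 : ℤ) : ℝ) := (Real.rpow_intCast x _).symm
  have hrpow2 : x ^ ((-n - 1 : ℤ) : ℝ) ≤ M₂ * E ^ ((-n - 1 : ℤ) : ℝ) :=
    rpow_sandwich _ x E c₁ K hc₁ hE hlx hux
  -- bound on cosh
  have hcoshbd : ‖Complex.cosh (Complex.I * (ω : ℂ) + (y : ℂ))‖ ≤ E :=
    le_trans (abs_cosh_le ω y) (cosh_le_exp_abs y)
  -- put things together
  have hLHS : ‖(b : ℂ) * Complex.cosh (Complex.I * (ω : ℂ) + (y : ℂ)) *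
      u (chi σ b ω (y : ℂ)) * (chi σ b ω (y : ℂ)) ^ (-n - 1)‖
      = b * ‖Complex.cosh (Complex.I * (ω : ℂ) + (y : ℂ))‖ *
        ‖u (chi σ b ω (y : ℂ))‖ * x ^ (-n - 1 : ℤ) := by
    rw [norm_mul, norm_mul, norm_mul, norm_zpow, Complex.norm_real, Real.norm_eq_abs, abs_of_pos hb, hxdef]
  have hEm : E ^ m = Real.exp (m * |y|) := by
    rw [hEdef, ← Real.exp_mul, mul_comm]
  have hEn : E ^ ((-n - 1 : ℤ) : ℝ) = Real.exp ((-(n : ℝ) - 1) * |y|) := by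
    rw [hEdef, ← Real.exp_mul, mul_comm]
    push_cast
    ring_nf
  have hexpsum : E * Real.exp (m * |y|) * Real.exp ((-(n : ℝ) - 1) * |y|)
      = Real.exp ((m - (n : ℝ)) * |y|) := by
    rw [hEdef, ← Real.exp_add, ← Real.exp_add]
    ring_nf
  rw [hLHS, hzpow]
  have step1 : b * ‖Complex.cosh (Complex.I * (ω : ℂ) + (y : ℂ))‖ *
      ‖u (chi σ b ω (y : ℂ))‖ * x ^ ((-n - 1 : ℤ) : ℝ)
      ≤ b * E * (C₀ * (M₁ * E ^ m)) * (M₂ * E ^ ((-n - 1 : ℤ) : ℝ)) := by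
    have habs_u : 0 ≤ ‖u (chi σ b ω (y : ℂ))‖ := norm_nonneg _
    have habs_c : 0 ≤ ‖Complex.cosh (Complex.I * (ω : ℂ) + (y : ℂ))‖ :=
      norm_nonneg _
    have hxpow0 : 0 ≤ x ^ ((-n - 1 : ℤ) : ℝ) := Real.rpow_nonneg hx0.le _
    have hb1 : b * ‖Complex.cosh (Complex.I * (ω : ℂ) + (y : ℂ))‖ ≤ b * E :=
      mul_le_mul_of_nonneg_left hcoshbd hb.le
    apply mul_le_mul _ hrpow2 hxpow0 (by positivity)
    apply mul_le_mul _ hubd habs_u (by positivity)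
    exact hb1
  calc b * ‖Complex.cosh (Complex.I * (ω : ℂ) + (y : ℂ))‖ *
      ‖u (chi σ b ω (y : ℂ))‖ * x ^ ((-n - 1 : ℤ) : ℝ)
      ≤ b * E * (C₀ * (M₁ * E ^ m)) * (M₂ * E ^ ((-n - 1 : ℤ) : ℝ)) := step1
    _ = b * C₀ * M₁ * M₂ * (E * Real.exp (m * |y|) * Real.exp ((-(n : ℝ) - 1) * |y|)) := by
        rw [hEm, hEn]; ring
    _ = b * C₀ * M₁ * M₂ * Real.exp ((m - (n : ℝ)) * |y|) := by rw [hexpsum]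
end
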